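/- At the level of words and components: for any word η ∈ X* and any two pairs d = (d1, d2), h = (h1, h2) of formal power series, (η ∘̃ d) ∘̃ h = η ∘̃ (h1 ⧢ (d1 ∘̃ h), (h2 ⧢ (d1 ∘̃ h)) + (d2 ∘̃ h)). -/

import Mathlib

/-- Words over the alphabet X = {x₀, x₁}, encoded as lists of booleans
(`false` ↔ x₀, `true` ↔ x₁). -/
abbrev Word : Type := List Bool

/-- Noncommutative formal power series over X with real coefficients. -/
abbrev Series : Type := Word → ℝ

/-- Auxiliary recursion computing the coefficient of the shuffle product. -/
def sh : Word → Series → Series → ℝ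
  | [], c, d => c [] * d []
  | a :: w, c, d => sh w (fun u => c (a :: u)) d + sh w c (fun u => d (a :: u))

/-- The shuffle product of two series. -/
def shuffle (c d : Series) : Series := fun w => sh w c d

/-- Left concatenation by the letter x₀. -/
def X0f (c : Series) : Series := fun w =>
  match w with
  | false :: w' => c w'
  | _ => 0

/-- Left concatenation by the letter x₁. -/
def X1f (c : Series) : Series := fun w =>
  match w with
  | true :: w' => c w'
  | _ => 0

/-- The indicator series of a word. -/
def deltaW (η : Word) : Series := fun w => if w = η then 1 else 0

/-- The shuffle unit 1∅. -/
def oneS : Series := deltaW []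

/-- Mixed composition product of a word with a pair of series:
∅ ∘̃ z = ∅, (x₀η) ∘̃ z = x₀(η ∘̃ z),
(x₁η) ∘̃ z = x₁(z₁ ⧢ (η ∘̃ z)) + x₀(z₂ ⧢ (η ∘̃ z)). -/
def wmix : Word → Series × Series → Series
  | [], _ => oneS
  | false :: η, z => X0f (wmix η z)
  | true :: η, z => X1f (shuffle z.1 (wmix η z)) + X0f (shuffle z.2 (wmix η z))

/-- Mixed composition product `c ∘̃ z`, extended linearly in the left argument.
(Since `wmix η z` vanishes on words shorter than `η`, the sum may be truncated.) -/
def mixcomp (c : Series) (z : Series × Series) : Series := fun w =>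
  ∑ n ∈ Finset.range (w.length + 1), ∑ f : Fin n → Bool,
    c (List.ofFn f) * wmix (List.ofFn f) z w

/-- Composition product of a word with a series:
∅ ∘ d = ∅, (x₀η) ∘ d = x₀(η ∘ d), (x₁η) ∘ d = x₀(d ⧢ (η ∘ d)). -/
def wcomp : Word → Series → Series
  | [], _ => oneS
  | false :: η, d => X0f (wcomp η d)
  | true :: η, d => X0f (shuffle d (wcomp η d))

/-- Composition product `c ∘ d`, extended linearly in the left argument. -/
def compP (c d : Series) : Series := fun w =>
  ∑ n ∈ Finset.range (w.length + 1), ∑ f : Fin n → Bool,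
    c (List.ofFn f) * wcomp (List.ofFn f) d w

/-- The group product on G: (c₁,c₂)·(d₁,d₂) = (c₁ ⧢ d₁, c₂ + c₁ ⧢ d₂). -/
def gmul (c d : Series × Series) : Series × Series :=
  (shuffle c.1 d.1, c.2 + shuffle c.1 d.2)

/-- The identity element e = (1∅, 0) of G. -/
def geId : Series × Series := (oneS, 0)

/-- Shuffle powers. -/
def shPow (c : Series) : ℕ → Series
  | 0 => oneS
  | n + 1 => shuffle c (shPow c n)

/-- Shuffle inverse of a series with constant coefficient 1, via the
geometric series c^{⧢ -1} = Σ_k (1∅ - c)^{⧢ k} (truncated by word length,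
which is exact since 1∅ - c is proper). -/
def shInv (c : Series) : Series := fun w =>
  ∑ k ∈ Finset.range (w.length + 1), shPow (oneS - c) k w

/-- The group inverse in (G,·). -/
def ginv (c : Series × Series) : Series × Series :=
  (shInv c.1, -(shuffle (shInv c.1) c.2))

/-- The product ◁ on G, componentwise mixed composition. -/
def triOp (c d : Series × Series) : Series × Series :=
  (mixcomp c.1 d, mixcomp c.2 d)

/-- The Grossman–Larson product c ⋆ d = (c ◁ d) · d. -/
def starOp (c d : Series × Series) : Series × Series := gmul (triOp c d) d

-- basic sh lemmas
lemma sh_nil (c d : Series) : sh [] c d = c [] * d [] := rfl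
lemma sh_cons (a : Bool) (w : Word) (c d : Series) :
    sh (a :: w) c d = sh w (fun u => c (a :: u)) d + sh w c (fun u => d (a :: u)) := rfl

lemma sh_ext : ∀ (w : Word) (c c' d d' : Series),
    (∀ u : Word, u.length ≤ w.length → c u = c' u) →
    (∀ u : Word, u.length ≤ w.length → d u = d' u) →
    sh w c d = sh w c' d'
  | [], c, c', d, d', hc, hd => by
      simp [sh_nil, hc [] (by simp), hd [] (by simp)]
  | a :: w, c, c', d, d', hc, hd => by
      rw [sh_cons, sh_cons,
        sh_ext w _ _ _ _ (fun u hu => hc (a :: u) (by simpa using Nat.succ_le_succ hu))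
          (fun u hu => hd u (le_trans hu (by simp))),
        sh_ext w _ _ _ _ (fun u hu => hc u (le_trans hu (by simp)))
          (fun u hu => hd (a :: u) (by simpa using Nat.succ_le_succ hu))]

lemma sh_add_left : ∀ (w : Word) (c c' d : Series),
    sh w (fun u => c u + c' u) d = sh w c d + sh w c' d
  | [], c, c', d => by simp [sh_nil, add_mul]
  | a :: w, c, c', d => by
      simp only [sh_cons, sh_add_left w]; ring

lemma sh_add_right : ∀ (w : Word) (c d d' : Series),
    sh w c (fun u => d u + d' u) = sh w c d + sh w c d'
  | [], c, d, d' => by simp [sh_nil, mul_add]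
  | a :: w, c, d, d' => by
      simp only [sh_cons, sh_add_right w]; ring

lemma sh_smul_right : ∀ (w : Word) (r : ℝ) (c d : Series),
    sh w c (fun u => r * d u) = r * sh w c d
  | [], r, c, d => by simp [sh_nil]; ring
  | a :: w, r, c, d => by
      simp only [sh_cons, sh_smul_right w]; ring

lemma sh_zero_right : ∀ (w : Word) (c : Series), sh w c (fun _ => 0) = 0
  | [], c => by simp [sh_nil]
  | a :: w, c => by simp only [sh_cons, sh_zero_right w]; ring

lemma sh_sum_right (w : Word) (c : Series) {ι : Type*} (s : Finset ι) (F : ι → Series) :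
    sh w c (fun u => ∑ i ∈ s, F i u) = ∑ i ∈ s, sh w c (F i) := by
  classical
  induction s using Finset.induction_on with
  | empty => simpa using sh_zero_right w c
  | insert _ _ h ih =>
      rw [Finset.sum_insert h]
      rw [show (fun u => ∑ i ∈ insert _ _, F i u) = fun u => F _ u + ∑ i ∈ _, F i u from
        funext fun u => Finset.sum_insert h]
      rw [sh_add_right, ih]

lemma sh_comm : ∀ (w : Word) (c d : Series), sh w c d = sh w d c
  | [], c, d => by simp [sh_nil]; ring
  | a :: w, c, d => by rw [sh_cons, sh_cons, sh_comm w, sh_comm w c]; ring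

lemma sh_assoc : ∀ (w : Word) (a b c : Series),
    sh w (shuffle a b) c = sh w a (shuffle b c)
  | [], a, b, c => by simp [sh_nil, shuffle]; ring
  | x :: w, a, b, c => by
      have hab : (fun u => shuffle a b (x :: u))
          = fun u => shuffle (fun v => a (x :: v)) b u + shuffle a (fun v => b (x :: v)) u :=
        funext fun u => rfl
      have hbc : (fun u => shuffle b c (x :: u))
          = fun u => shuffle (fun v => b (x :: v)) c u + shuffle b (fun v => c (x :: v)) u :=
        funext fun u => rfl
      rw [sh_cons, sh_cons, hab, hbc, sh_add_left, sh_add_right,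
        sh_assoc w, sh_assoc w, sh_assoc w]
      ring

lemma sh_vanish (w : Word) (c d : Series)
    (hd : ∀ u : Word, u.length ≤ w.length → d u = 0) : sh w c d = 0 := by
  rw [sh_ext w c c d (fun _ => 0) (fun _ _ => rfl) hd, sh_zero_right]

lemma wmix_short : ∀ (η : Word) (z : Series × Series) (u : Word),
    u.length < η.length → wmix η z u = 0
  | [], z, u, h => by simp at h
  | a :: η, z, [], h => by
      cases a <;> simp [wmix, X0f, X1f, Pi.add_apply]
  | a :: η, z, b :: u, h => by
      have hu : u.length < η.length := by simpa using Nat.lt_of_succ_lt_succ h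
      cases a with
      | false =>
          cases b <;> simp [wmix, X0f, wmix_short η z u hu]
      | true =>
          have h1 : sh u z.1 (wmix η z) = 0 :=
            sh_vanish u _ _ (fun v hv => wmix_short η z v (lt_of_le_of_lt hv hu))
          have h2 : sh u z.2 (wmix η z) = 0 :=
            sh_vanish u _ _ (fun v hv => wmix_short η z v (lt_of_le_of_lt hv hu))
          cases b <;> simp [wmix, X0f, X1f, Pi.add_apply, shuffle, h1, h2]

lemma mixcomp_trunc (c : Series) (z : Series × Series) (N : ℕ) (w : Word)
    (hN : w.length ≤ N) :
    mixcomp c z w = ∑ n ∈ Finset.range (N + 1), ∑ f : Fin n → Bool,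
      c (List.ofFn f) * wmix (List.ofFn f) z w := by
  unfold mixcomp
  refine Finset.sum_subset (by intro n hn; simp at hn ⊢; omega) ?_
  intro n _ hn
  simp only [Finset.mem_range, not_lt] at hn
  refine Finset.sum_eq_zero fun f _ => ?_
  rw [wmix_short (List.ofFn f) z w (by simp; omega), mul_zero]

lemma sum_fin_succ_bool (n : ℕ) (F : (Fin (n + 1) → Bool) → ℝ) :
    ∑ f : Fin (n + 1) → Bool, F f
      = (∑ g : Fin n → Bool, F (Fin.cons false g)) +
        (∑ g : Fin n → Bool, F (Fin.cons true g)) := by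
  rw [← (Fin.consEquiv (fun _ : Fin (n + 1) => Bool)).sum_comp F]
  rw [Fintype.sum_prod_type]
  simp [Fintype.sum_bool, Fin.consEquiv, add_comm]

lemma ofFn_cons (n : ℕ) (b : Bool) (g : Fin n → Bool) :
    List.ofFn (Fin.cons b g : Fin (n + 1) → Bool) = b :: List.ofFn g := by
  rw [List.ofFn_succ]; simp

lemma mixcomp_nil (c : Series) (z : Series × Series) : mixcomp c z [] = c [] := by
  simp [mixcomp, wmix, oneS, deltaW]

lemma mixcomp_cons (b : Bool) (w : Word) (c : Series) (z : Series × Series) :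
    mixcomp c z (b :: w) =
      ∑ n ∈ Finset.range (w.length + 1), ∑ g : Fin n → Bool,
        (c (false :: List.ofFn g) * wmix (false :: List.ofFn g) z (b :: w)
          + c (true :: List.ofFn g) * wmix (true :: List.ofFn g) z (b :: w)) := by
  unfold mixcomp
  rw [show (b :: w).length + 1 = w.length + 1 + 1 from rfl, Finset.sum_range_succ']
  have h0 : (∑ f : Fin 0 → Bool, c (List.ofFn f) * wmix (List.ofFn f) z (b :: w)) = 0 := by
    simp [wmix, oneS, deltaW]
  rw [h0, add_zero]
  refine Finset.sum_congr rfl fun n _ => ?_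
  rw [sum_fin_succ_bool n, ← Finset.sum_add_distrib]
  refine Finset.sum_congr rfl fun g _ => ?_
  rw [ofFn_cons, ofFn_cons]

lemma mixcomp_cons_true (w : Word) (c : Series) (z : Series × Series) :
    mixcomp c z (true :: w) = sh w z.1 (mixcomp (fun u => c (true :: u)) z) := by
  rw [mixcomp_cons]
  rw [sh_ext w z.1 z.1 _ (fun u => ∑ n ∈ Finset.range (w.length + 1), ∑ g : Fin n → Bool,
        c (true :: List.ofFn g) * wmix (List.ofFn g) z u) (fun _ _ => rfl)
      (fun u hu => mixcomp_trunc _ z w.length u hu)]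
  rw [sh_sum_right]
  refine Finset.sum_congr rfl fun n _ => ?_
  rw [sh_sum_right]
  refine Finset.sum_congr rfl fun g _ => ?_
  simp only [wmix, X0f, X1f, Pi.add_apply, shuffle]
  rw [sh_smul_right]
  ring

lemma mixcomp_cons_false (w : Word) (c : Series) (z : Series × Series) :
    mixcomp c z (false :: w) = mixcomp (fun u => c (false :: u)) z w
      + sh w z.2 (mixcomp (fun u => c (true :: u)) z) := by
  rw [mixcomp_cons]
  rw [sh_ext w z.2 z.2 _ (fun u => ∑ n ∈ Finset.range (w.length + 1), ∑ g : Fin n → Bool,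
        c (true :: List.ofFn g) * wmix (List.ofFn g) z u) (fun _ _ => rfl)
      (fun u hu => mixcomp_trunc _ z w.length u hu)]
  rw [sh_sum_right, mixcomp, ← Finset.sum_add_distrib]
  refine Finset.sum_congr rfl fun n _ => ?_
  rw [sh_sum_right, ← Finset.sum_add_distrib]
  refine Finset.sum_congr rfl fun g _ => ?_
  simp only [wmix, X0f, X1f, Pi.add_apply, shuffle]
  rw [sh_smul_right]
  ring

lemma mixcomp_add (c c' : Series) (z : Series × Series) :
    mixcomp (fun u => c u + c' u) z = fun w => mixcomp c z w + mixcomp c' z w := by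
  funext w
  simp only [mixcomp, add_mul, Finset.sum_add_distrib]

lemma mixcomp_shuffle_aux (z : Series × Series) :
    ∀ (N : ℕ) (w : Word), w.length ≤ N → ∀ (a b : Series),
      mixcomp (shuffle a b) z w = sh w (mixcomp a z) (mixcomp b z)
  | N, [], _, a, b => by
      simp [mixcomp_nil, sh_nil, shuffle, sh_nil]
  | 0, x :: w, h, a, b => by simp at h
  | N + 1, x :: w, h, a, b => by
      have hw' : w.length ≤ N := by simpa using h
      -- deconstructions of shuffles
      have hsh : ∀ (y : Bool), (fun u => shuffle a b (y :: u))
          = fun u => shuffle (fun v => a (y :: v)) b u + shuffle a (fun v => b (y :: v)) u :=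
        fun y => funext fun u => rfl
      -- the two inner series agree up to length w.length
      have key : ∀ (p q : Series), (∀ u : Word, u.length ≤ w.length →
            mixcomp (shuffle p q) z u = shuffle (mixcomp p z) (mixcomp q z) u) :=
        fun p q u hu => mixcomp_shuffle_aux z N u (le_trans hu hw') p q
      cases x with
      | true =>
          rw [mixcomp_cons_true, sh_cons]
          rw [show (fun u => shuffle a b (true :: u)) = _ from hsh true]
          rw [mixcomp_add]
          rw [sh_add_right]
          rw [sh_ext w z.1 z.1 (mixcomp (shuffle (fun v => a (true :: v)) b) z)
            (shuffle (mixcomp (fun v => a (true :: v)) z) (mixcomp b z)) (fun _ _ => rfl)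
            (key _ _)]
          rw [sh_ext w z.1 z.1 (mixcomp (shuffle a (fun v => b (true :: v))) z)
            (shuffle (mixcomp a z) (mixcomp (fun v => b (true :: v)) z)) (fun _ _ => rfl)
            (key _ _)]
          rw [sh_ext w (fun u => mixcomp a z (true :: u)) (shuffle z.1 (mixcomp (fun v => a (true :: v)) z))
            (mixcomp b z) (mixcomp b z)
            (fun u _ => mixcomp_cons_true u a z) (fun _ _ => rfl)]
          rw [sh_ext w (mixcomp a z) (mixcomp a z)
            (fun u => mixcomp b z (true :: u)) (shuffle z.1 (mixcomp (fun v => b (true :: v)) z))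
            (fun _ _ => rfl) (fun u _ => mixcomp_cons_true u b z)]
          rw [← sh_assoc w z.1]
          rw [sh_comm w z.1 (shuffle (mixcomp a z) (mixcomp (fun v => b (true :: v)) z))]
          rw [sh_assoc w (mixcomp a z)]
          rw [sh_ext w (mixcomp a z) (mixcomp a z)
            (shuffle (mixcomp (fun v => b (true :: v)) z) z.1)
            (shuffle z.1 (mixcomp (fun v => b (true :: v)) z))
            (fun _ _ => rfl) (fun u _ => sh_comm u _ _)]
      | false =>
          rw [mixcomp_cons_false, sh_cons]
          rw [show (fun u => shuffle a b (false :: u)) = _ from hsh false,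
              show (fun u => shuffle a b (true :: u)) = _ from hsh true]
          rw [mixcomp_add, mixcomp_add]
          rw [sh_add_right]
          beta_reduce
          rw [key _ _ w le_rfl, key _ _ w le_rfl]
          rw [sh_ext w z.2 z.2 (mixcomp (shuffle (fun v => a (true :: v)) b) z)
            (shuffle (mixcomp (fun v => a (true :: v)) z) (mixcomp b z)) (fun _ _ => rfl)
            (key _ _)]
          rw [sh_ext w z.2 z.2 (mixcomp (shuffle a (fun v => b (true :: v))) z)
            (shuffle (mixcomp a z) (mixcomp (fun v => b (true :: v)) z)) (fun _ _ => rfl)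
            (key _ _)]
          rw [sh_ext w (fun u => mixcomp a z (false :: u))
            (fun u => mixcomp (fun v => a (false :: v)) z u + shuffle z.2 (mixcomp (fun v => a (true :: v)) z) u)
            (mixcomp b z) (mixcomp b z)
            (fun u _ => mixcomp_cons_false u a z) (fun _ _ => rfl)]
          rw [sh_ext w (mixcomp a z) (mixcomp a z)
            (fun u => mixcomp b z (false :: u))
            (fun u => mixcomp (fun v => b (false :: v)) z u + shuffle z.2 (mixcomp (fun v => b (true :: v)) z) u)
            (fun _ _ => rfl) (fun u _ => mixcomp_cons_false u b z)]
          rw [sh_add_left, sh_add_right]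
          rw [← sh_assoc w z.2]
          rw [sh_comm w z.2 (shuffle (mixcomp a z) (mixcomp (fun v => b (true :: v)) z))]
          rw [sh_assoc w (mixcomp a z)]
          rw [sh_ext w (mixcomp a z) (mixcomp a z)
            (shuffle (mixcomp (fun v => b (true :: v)) z) z.2)
            (shuffle z.2 (mixcomp (fun v => b (true :: v)) z))
            (fun _ _ => rfl) (fun u _ => sh_comm u _ _)]
          simp only [shuffle]
          ring
  termination_by N w => N + w.length

lemma mixcomp_shuffle (a b : Series) (z : Series × Series) :
    mixcomp (shuffle a b) z = shuffle (mixcomp a z) (mixcomp b z) :=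
  funext fun w => mixcomp_shuffle_aux z w.length w le_rfl a b

lemma mixcomp_zero (z : Series × Series) : mixcomp (fun _ => 0) z = fun _ => 0 := by
  funext w; simp [mixcomp]

lemma mixcomp_oneS (z : Series × Series) : mixcomp oneS z = oneS := by
  funext w
  cases w with
  | nil => rw [mixcomp_nil]
  | cons b w =>
      have h0 : ∀ (y : Bool), (fun u => oneS (y :: u)) = fun _ : Word => (0 : ℝ) := by
        intro y; funext u; simp [oneS, deltaW]
      cases b with
      | true =>
          rw [mixcomp_cons_true, h0, mixcomp_zero, sh_zero_right]
          simp [oneS, deltaW]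
      | false =>
          rw [mixcomp_cons_false, h0, h0, mixcomp_zero, sh_zero_right]
          simp [oneS, deltaW, mixcomp]

lemma mixcomp_X0f (c : Series) (z : Series × Series) :
    mixcomp (X0f c) z = X0f (mixcomp c z) := by
  funext w
  cases w with
  | nil => rw [mixcomp_nil]; rfl
  | cons b w =>
      have ht : (fun u => X0f c (true :: u)) = fun _ : Word => (0 : ℝ) := rfl
      have hf : (fun u => X0f c (false :: u)) = c := rfl
      cases b with
      | true => rw [mixcomp_cons_true, ht, mixcomp_zero, sh_zero_right]; rfl
      | false => rw [mixcomp_cons_false, ht, hf, mixcomp_zero, sh_zero_right, add_zero]; rfl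

lemma mixcomp_X1f (c : Series) (z : Series × Series) :
    mixcomp (X1f c) z = X1f (shuffle z.1 (mixcomp c z)) + X0f (shuffle z.2 (mixcomp c z)) := by
  funext w
  cases w with
  | nil => rw [mixcomp_nil]; simp [X1f, X0f, Pi.add_apply]
  | cons b w =>
      have ht : (fun u => X1f c (true :: u)) = c := rfl
      have hf : (fun u => X1f c (false :: u)) = fun _ : Word => (0 : ℝ) := rfl
      cases b with
      | true =>
          rw [mixcomp_cons_true, ht]
          simp [X1f, X0f, Pi.add_apply, shuffle]
      | false =>
          rw [mixcomp_cons_false, ht, hf, mixcomp_zero]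
          simp [X1f, X0f, Pi.add_apply, shuffle, mixcomp]

lemma X0f_add (c c' : Series) : X0f (c + c') = X0f c + X0f c' := by
  funext w
  cases w with
  | nil => simp [X0f]
  | cons b w => cases b <;> simp [X0f]

lemma shuffle_add_left (c c' d : Series) :
    shuffle (c + c') d = shuffle c d + shuffle d c' := by
  funext w
  have : sh w (c + c') d = sh w c d + sh w c' d := sh_add_left w c c' d
  simpa [shuffle, Pi.add_apply, sh_comm w d c'] using this

lemma shuffle_assoc (a b c : Series) :
    shuffle a (shuffle b c) = shuffle (shuffle a b) c :=
  funext fun w => (sh_assoc w a b c).symm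

/-- at the level of words, (η ∘̃ d) ∘̃ h
= η ∘̃ (h₁ ⧢ (d₁ ∘̃ h), (h₂ ⧢ (d₁ ∘̃ h)) + (d₂ ∘̃ h)). -/
theorem wmix_mixcomp (η : Word) (d h : Series × Series) :
    mixcomp (wmix η d) h
      = wmix η (shuffle h.1 (mixcomp d.1 h),
                shuffle h.2 (mixcomp d.1 h) + mixcomp d.2 h) := by
  induction η with
  | nil => exact mixcomp_oneS h
  | cons b η ih =>
      set z' : Series × Series := (shuffle h.1 (mixcomp d.1 h),
        shuffle h.2 (mixcomp d.1 h) + mixcomp d.2 h) with hz'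
      cases b with
      | false =>
          show mixcomp (X0f (wmix η d)) h = X0f (wmix η z')
          rw [mixcomp_X0f, ih]
      | true =>
          show mixcomp (X1f (shuffle d.1 (wmix η d)) + X0f (shuffle d.2 (wmix η d))) h
            = X1f (shuffle z'.1 (wmix η z')) + X0f (shuffle z'.2 (wmix η z'))
          have hadd : mixcomp (X1f (shuffle d.1 (wmix η d)) + X0f (shuffle d.2 (wmix η d))) h
              = fun w => mixcomp (X1f (shuffle d.1 (wmix η d))) h w
                + mixcomp (X0f (shuffle d.2 (wmix η d))) h w := by
            have := mixcomp_add (X1f (shuffle d.1 (wmix η d))) (X0f (shuffle d.2 (wmix η d))) h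
            exact this
          rw [hadd]
          have e1 : mixcomp (shuffle d.1 (wmix η d)) h = shuffle (mixcomp d.1 h) (wmix η z') := by
            rw [mixcomp_shuffle, ih]
          have e2 : mixcomp (shuffle d.2 (wmix η d)) h = shuffle (mixcomp d.2 h) (wmix η z') := by
            rw [mixcomp_shuffle, ih]
          rw [mixcomp_X1f, mixcomp_X0f, e1, e2]
          funext w
          have hz1 : shuffle z'.1 (wmix η z') = shuffle h.1 (shuffle (mixcomp d.1 h) (wmix η z')) := by
            rw [hz', shuffle_assoc]
          have hz2 : shuffle z'.2 (wmix η z')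
              = shuffle h.2 (shuffle (mixcomp d.1 h) (wmix η z'))
                + shuffle (mixcomp d.2 h) (wmix η z') := by
            rw [hz']
            show shuffle (shuffle h.2 (mixcomp d.1 h) + mixcomp d.2 h) (wmix η z') = _
            funext v
            show sh v (fun u => shuffle h.2 (mixcomp d.1 h) u + mixcomp d.2 h u) (wmix η z')
              = sh v h.2 (shuffle (mixcomp d.1 h) (wmix η z')) + sh v (mixcomp d.2 h) (wmix η z')
            rw [sh_add_left, sh_assoc]
          rw [hz1, hz2, X0f_add]
          simp only [Pi.add_apply]
          ring
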